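/- Let H = p₁² + p₂² + b·q₂^(-2/3) on the region q₂ > 0 of ℝ⁴ with coordinates (q₁,q₂,p₁,p₂). Define X₄ = p₂³(q₂p₁ - q₁p₂) + p₂(3q₂p₁ - 2q₁p₂)·b·q₂^(-2/3) - b²q₁q₂^(-4/3). Then the canonical Poisson bracket {H, X₄} = ∂H/∂q₁·∂X₄/∂p₁ + ∂H/∂q₂·∂X₄/∂p₂ - ∂H/∂p₁·∂X₄/∂q₁ - ∂H/∂p₂·∂X₄/∂q₂ vanishes identically. -/

import Mathlib

/-- Canonical Poisson bracket on ℝ⁴ with coordinates (q₁,q₂,p₁,p₂). -/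
noncomputable def pb (F G : ℝ → ℝ → ℝ → ℝ → ℝ) (q1 q2 p1 p2 : ℝ) : ℝ :=
  deriv (fun x => F x q2 p1 p2) q1 * deriv (fun x => G q1 q2 x p2) p1
  + deriv (fun x => F q1 x p1 p2) q2 * deriv (fun x => G q1 q2 p1 x) p2
  - deriv (fun x => F q1 q2 x p2) p1 * deriv (fun x => G x q2 p1 p2) q1
  - deriv (fun x => F q1 q2 p1 x) p2 * deriv (fun x => G q1 x p1 p2) q2

noncomputable def H (b : ℝ) (q1 q2 p1 p2 : ℝ) : ℝ :=
  p1 ^ 2 + p2 ^ 2 + b * q2 ^ (-(2 : ℝ) / 3)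

noncomputable def X4 (b : ℝ) (q1 q2 p1 p2 : ℝ) : ℝ :=
  p2 ^ 3 * (q2 * p1 - q1 * p2)
  + p2 * (3 * q2 * p1 - 2 * q1 * p2) * b * q2 ^ (-(2 : ℝ) / 3)
  - b ^ 2 * q1 * q2 ^ (-(4 : ℝ) / 3)

theorem stmt0 (b : ℝ) (q1 q2 p1 p2 : ℝ) (hq2 : 0 < q2) :
    pb (H b) (X4 b) q1 q2 p1 p2 = 0 := by
  have hne : q2 ≠ 0 := hq2.ne'
  have hr : HasDerivAt (fun y : ℝ => y ^ (-(2:ℝ)/3)) ((-(2:ℝ)/3) * q2 ^ (-(2:ℝ)/3 - 1)) q2 :=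
    Real.hasDerivAt_rpow_const (Or.inl hne)
  have hs : HasDerivAt (fun y : ℝ => y ^ (-(4:ℝ)/3)) ((-(4:ℝ)/3) * q2 ^ (-(4:ℝ)/3 - 1)) q2 :=
    Real.hasDerivAt_rpow_const (Or.inl hne)
  -- H derivatives
  have hHq1 : deriv (fun x => H b x q2 p1 p2) q1 = 0 := by simp [H]
  have hHp1 : deriv (fun x => H b q1 q2 x p2) p1 = 2 * p1 := by
    have : HasDerivAt (fun x : ℝ => x ^ 2 + p2 ^ 2 + b * q2 ^ (-(2:ℝ)/3)) (2 * p1) p1 := by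
      simpa using ((hasDerivAt_pow 2 p1).add_const (p2 ^ 2)).add_const (b * q2 ^ (-(2:ℝ)/3))
    exact this.deriv
  have hHp2 : deriv (fun x => H b q1 q2 p1 x) p2 = 2 * p2 := by
    have : HasDerivAt (fun x : ℝ => p1 ^ 2 + x ^ 2 + b * q2 ^ (-(2:ℝ)/3)) (2 * p2) p2 := by
      simpa using (((hasDerivAt_pow 2 p2).const_add (p1 ^ 2)).add_const (b * q2 ^ (-(2:ℝ)/3)))
    exact this.deriv
  have hHq2 : deriv (fun x => H b q1 x p1 p2) q2
      = b * ((-(2:ℝ)/3) * q2 ^ (-(2:ℝ)/3 - 1)) := by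
    have : HasDerivAt (fun x : ℝ => p1 ^ 2 + p2 ^ 2 + b * x ^ (-(2:ℝ)/3))
        (b * ((-(2:ℝ)/3) * q2 ^ (-(2:ℝ)/3 - 1))) q2 :=
      (hr.const_mul b).const_add (p1 ^ 2 + p2 ^ 2)
    exact this.deriv
  -- X4 derivatives
  have hXp1 : deriv (fun x => X4 b q1 q2 x p2) p1
      = p2 ^ 3 * (q2 * 1) + p2 * (3 * q2 * 1) * b * q2 ^ (-(2:ℝ)/3) := by
    have hA : HasDerivAt (fun x : ℝ => p2 ^ 3 * (q2 * x - q1 * p2)) (p2 ^ 3 * (q2 * 1)) p1 :=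
      (((hasDerivAt_id p1).const_mul q2).sub_const (q1 * p2)).const_mul (p2 ^ 3)
    have hB : HasDerivAt (fun x : ℝ => p2 * (3 * q2 * x - 2 * q1 * p2) * b * q2 ^ (-(2:ℝ)/3))
        (p2 * (3 * q2 * 1) * b * q2 ^ (-(2:ℝ)/3)) p1 :=
      ((((hasDerivAt_id p1).const_mul (3 * q2)).sub_const (2 * q1 * p2)).const_mul p2).mul_const b
        |>.mul_const _
    have := (hA.add hB).sub_const (b ^ 2 * q1 * q2 ^ (-(4:ℝ)/3))
    exact this.deriv
  have hXq1 : deriv (fun x => X4 b x q2 p1 p2) q1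
      = p2 ^ 3 * (0 - 1 * p2) + p2 * (0 - 2 * 1 * p2) * b * q2 ^ (-(2:ℝ)/3)
        - b ^ 2 * 1 * q2 ^ (-(4:ℝ)/3) := by
    have hA : HasDerivAt (fun x : ℝ => p2 ^ 3 * (q2 * p1 - x * p2)) (p2 ^ 3 * (0 - 1 * p2)) q1 :=
      ((hasDerivAt_const q1 (q2 * p1)).sub ((hasDerivAt_id q1).mul_const p2)).const_mul (p2 ^ 3)
    have hB : HasDerivAt (fun x : ℝ => p2 * (3 * q2 * p1 - 2 * x * p2) * b * q2 ^ (-(2:ℝ)/3))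
        (p2 * (0 - 2 * 1 * p2) * b * q2 ^ (-(2:ℝ)/3)) q1 :=
      (((hasDerivAt_const q1 (3 * q2 * p1)).sub (((hasDerivAt_id q1).const_mul 2).mul_const p2)).const_mul
        p2).mul_const b |>.mul_const _
    have hC : HasDerivAt (fun x : ℝ => b ^ 2 * x * q2 ^ (-(4:ℝ)/3))
        (b ^ 2 * 1 * q2 ^ (-(4:ℝ)/3)) q1 :=
      ((hasDerivAt_id q1).const_mul (b ^ 2)).mul_const _
    exact ((hA.add hB).sub hC).deriv
  have hXp2 : deriv (fun x => X4 b q1 q2 p1 x) p2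
      = ((3:ℕ) * p2 ^ 2 * (q2 * p1 - q1 * p2) + p2 ^ 3 * (0 - q1 * 1))
        + ((1 * (3 * q2 * p1 - 2 * q1 * p2) + p2 * (0 - 2 * q1 * 1)) * b) * q2 ^ (-(2:ℝ)/3) := by
    have hA : HasDerivAt (fun x : ℝ => x ^ 3 * (q2 * p1 - q1 * x))
        ((3:ℕ) * p2 ^ 2 * (q2 * p1 - q1 * p2) + p2 ^ 3 * (0 - q1 * 1)) p2 :=
      (hasDerivAt_pow 3 p2).mul ((hasDerivAt_const p2 (q2 * p1)).sub ((hasDerivAt_id p2).const_mul q1))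
    have hB : HasDerivAt (fun x : ℝ => x * (3 * q2 * p1 - 2 * q1 * x) * b * q2 ^ (-(2:ℝ)/3))
        (((1 * (3 * q2 * p1 - 2 * q1 * p2) + p2 * (0 - 2 * q1 * 1)) * b) * q2 ^ (-(2:ℝ)/3)) p2 :=
      ((hasDerivAt_id p2).mul ((hasDerivAt_const p2 (3 * q2 * p1)).sub ((hasDerivAt_id p2).const_mul (2 * q1)))).mul_const b
        |>.mul_const _
    have := (hA.add hB).sub_const (b ^ 2 * q1 * q2 ^ (-(4:ℝ)/3))
    simpa [X4] using this.deriv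
  have hXq2 : deriv (fun x => X4 b q1 x p1 p2) q2
      = p2 ^ 3 * (1 * p1)
        + ((p2 * (3 * 1 * p1) * b) * q2 ^ (-(2:ℝ)/3)
           + (p2 * (3 * q2 * p1 - 2 * q1 * p2) * b) * ((-(2:ℝ)/3) * q2 ^ (-(2:ℝ)/3 - 1)))
        - b ^ 2 * q1 * ((-(4:ℝ)/3) * q2 ^ (-(4:ℝ)/3 - 1)) := by
    have hA : HasDerivAt (fun y : ℝ => p2 ^ 3 * (y * p1 - q1 * p2)) (p2 ^ 3 * (1 * p1)) q2 :=
      (((hasDerivAt_id q2).mul_const p1).sub_const (q1 * p2)).const_mul (p2 ^ 3)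
    have hB : HasDerivAt (fun y : ℝ => p2 * (3 * y * p1 - 2 * q1 * p2) * b)
        (p2 * (3 * 1 * p1) * b) q2 := by
      have : HasDerivAt (fun y : ℝ => 3 * y * p1 - 2 * q1 * p2) (3 * 1 * p1) q2 :=
        (((hasDerivAt_id q2).const_mul 3).mul_const p1).sub_const (2 * q1 * p2)
      exact (this.const_mul p2).mul_const b
    have hC : HasDerivAt (fun y : ℝ => b ^ 2 * q1 * y ^ (-(4:ℝ)/3))
        (b ^ 2 * q1 * ((-(4:ℝ)/3) * q2 ^ (-(4:ℝ)/3 - 1))) q2 :=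
      hs.const_mul (b ^ 2 * q1)
    exact ((hA.add (hB.mul hr)).sub hC).deriv
  simp only [pb]
  rw [hHq1, hHp1, hHp2, hHq2, hXp1, hXq1, hXp2, hXq2]
  -- now algebra with rpow
  obtain ⟨u, hu_def⟩ : ∃ u : ℝ, u = q2 ^ ((1:ℝ)/3) := ⟨_, rfl⟩
  have hu : (0:ℝ) < u := hu_def ▸ Real.rpow_pos_of_pos hq2 _
  have key : ∀ n : ℤ, q2 ^ ((1:ℝ)/3 * n) = u ^ n := by
    intro n
    rw [Real.rpow_mul hq2.le, ← hu_def, Real.rpow_intCast]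
  have h2 : q2 ^ (-(2:ℝ)/3) = u ^ (-2:ℤ) := by
    rw [← key (-2)]; norm_num
  have h4 : q2 ^ (-(4:ℝ)/3) = u ^ (-4:ℤ) := by
    rw [← key (-4)]; norm_num
  have h5 : q2 ^ (-(2:ℝ)/3 - 1) = u ^ (-5:ℤ) := by
    rw [← key (-5)]; norm_num
  have h7 : q2 ^ (-(4:ℝ)/3 - 1) = u ^ (-7:ℤ) := by
    rw [← key (-7)]; norm_num
  have hq : q2 = u ^ (3:ℤ) := by
    rw [← key 3]; norm_num
  rw [h2, h4, h5, h7, hq]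
  field_simp
  norm_num [zpow_ofNat]
  ring
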